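/- Fix a positive integer h and a positive integer k, and let γ_0(h), γ_1(h), ... be the greedy B_h-set. For 1 ≤ r ≤ h define F_r^{(k)} as the set of rational numbers (1/r)·Σ_{i=1}^{k} γ_i(h)·(m_i − m'_i), where the m_i and m'_i range over nonnegative integers with Σ_{i=1}^{k} m_i ≤ h and Σ_{i=1}^{k} m'_i ≤ h − r, and let F^{(k)} = ∪_{r=1}^{h} F_r^{(k)}. Then γ_{k+1}(h) equals the smallest nonnegative integer not belonging to F^{(k)}. -/

import Mathlib

/-- A set `A` of nonnegative integers is a `B_h`-set if every solution to
`a_1 + ... + a_h = b_1 + ... + b_h` with all `a_i, b_i ∈ A` has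
`{a_1, ..., a_h} = {b_1, ..., b_h}` as multisets. -/
def IsBhSet (h : ℕ) (A : Set ℕ) : Prop :=
  ∀ a b : Fin h → ℕ, (∀ i, a i ∈ A) → (∀ i, b i ∈ A) →
    (∑ i, a i) = (∑ i, b i) →
    Multiset.map a Finset.univ.val = Multiset.map b Finset.univ.val

/-- Auxiliary construction of the greedy `B_h`-set: `greedyAux h k` is the pair
consisting of the `k`-th element `γ_k(h)` of the greedy `B_h`-set together with
the finite set `{γ_0(h), ..., γ_k(h)}`.  We have `γ_0(h) = 0`, `γ_1(h) = 1`, and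
for `k ≥ 1`, `γ_{k+1}(h)` is the smallest integer greater than `γ_k(h)` such
that `{γ_0(h), ..., γ_k(h), γ_{k+1}(h)}` is a `B_h`-set. -/
noncomputable def greedyAux (h : ℕ) : ℕ → ℕ × Finset ℕ
  | 0 => (0, {0})
  | (k + 1) =>
    let p := greedyAux h k
    let g := if k = 0 then 1
      else sInf {x : ℕ | p.1 < x ∧ IsBhSet h ((insert x p.2 : Finset ℕ) : Set ℕ)}
    (g, insert g p.2)

/-- `greedy h k` is the `k`-th element `γ_k(h)` of the greedy `B_h`-set. -/
noncomputable def greedy (h k : ℕ) : ℕ := (greedyAux h k).1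

namespace BH

/-- Multiset version of B_h. -/
def BhM (h : ℕ) (S : Set ℕ) : Prop :=
  ∀ s t : Multiset ℕ, Multiset.card s = h → Multiset.card t = h →
    (∀ x ∈ s, x ∈ S) → (∀ x ∈ t, x ∈ S) → s.sum = t.sum → s = t

lemma multiset_of_card {h : ℕ} (s : Multiset ℕ) (hs : Multiset.card s = h) :
    ∃ a : Fin h → ℕ, Multiset.map a Finset.univ.val = s := by
  subst hs
  obtain ⟨l, rfl⟩ : ∃ l : List ℕ, (l : Multiset ℕ) = s := ⟨s.toList, Multiset.coe_toList s⟩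
  refine ⟨fun i => l.get (Fin.cast (by simp) i), ?_⟩
  rw [Fin.univ_val_map]
  refine congrArg _ ?_
  refine List.ext_getElem (by simp) ?_
  intro n h1 h2
  simp [List.getElem_ofFn]

lemma isBh_iff {h : ℕ} (S : Set ℕ) : IsBhSet h S ↔ BhM h S := by
  constructor
  · intro H s t hs ht hsS htS hsum
    obtain ⟨a, ha⟩ := multiset_of_card s hs
    obtain ⟨b, hb⟩ := multiset_of_card t ht
    rw [← ha, ← hb]
    refine H a b ?_ ?_ ?_
    · intro i; apply hsS; rw [← ha]; exact Multiset.mem_map_of_mem _ (Finset.mem_univ_val _)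
    · intro i; apply htS; rw [← hb]; exact Multiset.mem_map_of_mem _ (Finset.mem_univ_val _)
    · have : (Multiset.map a Finset.univ.val).sum = (Multiset.map b Finset.univ.val).sum := by
        rw [ha, hb]; exact hsum
      simpa [Finset.sum] using this
  · intro H a b haS hbS hsum
    refine H _ _ (by simp) (by simp) ?_ ?_ ?_
    · intro x hx; obtain ⟨i, _, rfl⟩ := Multiset.mem_map.1 hx; exact haS i
    · intro x hx; obtain ⟨i, _, rfl⟩ := Multiset.mem_map.1 hx; exact hbS i
    · simpa [Finset.sum] using hsum


variable {h k : ℕ}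

noncomputable def Aset (h k : ℕ) : Finset ℕ := (greedyAux h k).2

lemma greedy_zero : greedy h 0 = 0 := rfl

lemma Aset_zero : Aset h 0 = {0} := rfl

lemma greedy_one : greedy h 1 = 1 := by
  simp [greedy, greedyAux]

lemma Aset_succ : Aset h (k + 1) = insert (greedy h (k + 1)) (Aset h k) := rfl

lemma greedy_succ (hk : 1 ≤ k) :
    greedy h (k + 1) = sInf {x : ℕ | greedy h k < x ∧
      IsBhSet h ((insert x (Aset h k) : Finset ℕ) : Set ℕ)} := by
  obtain ⟨j, rfl⟩ := Nat.exists_eq_add_of_le hk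
  show (greedyAux h (1 + j + 1)).1 = _
  rw [greedyAux]
  simp only [Nat.add_eq_zero, Nat.one_ne_zero, false_and, if_false]
  rfl

lemma greedy_mem_Aset : greedy h k ∈ Aset h k := by
  cases k with
  | zero => simp [greedy, Aset, greedyAux]
  | succ j => rw [Aset_succ]; exact Finset.mem_insert_self _ _

lemma zero_mem_Aset : (0 : ℕ) ∈ Aset h k := by
  induction k with
  | zero => simp [Aset_zero]
  | succ j ih => rw [Aset_succ]; exact Finset.mem_insert_of_mem ih

lemma Aset_mono {j : ℕ} (hj : j ≤ k) : Aset h j ⊆ Aset h k := by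
  induction k with
  | zero => simp_all
  | succ i ih =>
    rcases Nat.lt_or_ge j (i + 1) with hlt | hge
    · exact (ih (Nat.lt_succ_iff.mp hlt)).trans (by rw [Aset_succ]; exact Finset.subset_insert _ _)
    · have : j = i + 1 := le_antisymm hj hge
      subst this; rfl

lemma mem_Aset_iff {x : ℕ} : x ∈ Aset h k ↔ ∃ j ≤ k, greedy h j = x := by
  induction k with
  | zero =>
    rw [Aset_zero]
    simp only [Finset.mem_singleton]
    constructor
    · rintro rfl; exact ⟨0, le_refl _, rfl⟩
    · rintro ⟨j, hj, rfl⟩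
      have : j = 0 := Nat.le_zero.mp hj
      subst this; rfl
  | succ i ih =>
    rw [Aset_succ, Finset.mem_insert, ih]
    constructor
    · rintro (rfl | ⟨j, hj, rfl⟩)
      · exact ⟨i + 1, le_refl _, rfl⟩
      · exact ⟨j, hj.trans (Nat.le_succ i), rfl⟩
    · rintro ⟨j, hj, rfl⟩
      rcases Nat.lt_or_ge j (i + 1) with hlt | hge
      · exact Or.inr ⟨j, Nat.lt_succ_iff.mp hlt, rfl⟩
      · exact Or.inl (by rw [le_antisymm hj hge])

lemma bhM_anti {A B : Set ℕ} (hAB : A ⊆ B) (hB : BhM h B) : BhM h A :=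
  fun s t hs ht hsA htA hsum =>
    hB s t hs ht (fun x hx => hAB (hsA x hx)) (fun x hx => hAB (htA x hx)) hsum

lemma bhM_insert_big (hh : 1 ≤ h) (S : Finset ℕ) (h0 : (0 : ℕ) ∈ S)
    (hS : BhM h ↑S) (x : ℕ) (hx : ∀ y ∈ S, h * y < x) :
    BhM h ((insert x S : Finset ℕ) : Set ℕ) := by
  have hxpos : 0 < x := lt_of_le_of_lt (Nat.zero_le _) (hx 0 h0)
  -- main bound: any multiset with elements in S and card ≤ h has sum < x
  have bound : ∀ u : Multiset ℕ, Multiset.card u ≤ h → (∀ y ∈ u, y ∈ S) → u.sum < x := by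
    intro u hcard hmem
    have h1 : u.sum * h ≤ Multiset.card u * (x - 1) := by
      calc u.sum * h = (Multiset.map (fun y => y * h) u).sum := by
            rw [Multiset.sum_map_mul_right]; simp
        _ ≤ Multiset.card (Multiset.map (fun y => y * h) u) • (x - 1) := by
            apply Multiset.sum_le_card_nsmul
            intro z hz
            obtain ⟨y, hy, rfl⟩ := Multiset.mem_map.1 hz
            have h2 := hx y (hmem y hy)
            rw [Nat.mul_comm]
            omega
        _ = Multiset.card u * (x - 1) := by simp [smul_eq_mul]
    by_contra hcon
    push_neg at hcon
    have h2 : x * h ≤ u.sum * h := Nat.mul_le_mul_right h hcon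
    have h2' : Multiset.card u * (x - 1) ≤ h * (x - 1) := Nat.mul_le_mul_right _ hcard
    have h3 : h * (x - 1) + h = h * x := by
      rw [← Nat.mul_succ]
      congr 1
      omega
    have h4 : x * h = h * x := Nat.mul_comm x h
    linarith
  -- cancellation of unequal multiplicities bounded sums
  have key2 : ∀ a b sa tb : ℕ, sa < x → tb < x → a * x + sa = b * x + tb → a = b := by
    intro a b sa tb h1 h2 h3
    rcases Nat.lt_trichotomy a b with hlt | heq | hgt
    · exfalso
      have h4 : (a + 1) * x ≤ b * x := Nat.mul_le_mul_right x hlt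
      rw [Nat.succ_mul] at h4
      linarith
    · exact heq
    · exfalso
      have h4 : (b + 1) * x ≤ a * x := Nat.mul_le_mul_right x hgt
      rw [Nat.succ_mul] at h4
      linarith
  intro s t hs ht hsS htS hsum
  have hdec : ∀ u : Multiset ℕ, (∀ y ∈ u, y ∈ ((insert x S : Finset ℕ) : Set ℕ)) →
      u = Multiset.replicate (u.count x) x + u.filter (· ≠ x) ∧
      (∀ y ∈ u.filter (· ≠ x), y ∈ S) := by
    intro u hu
    constructor
    · conv_lhs => rw [← Multiset.filter_add_not (· = x) u]
      rw [Multiset.filter_eq']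
    · intro y hy
      rw [Multiset.mem_filter] at hy
      have := hu y hy.1
      simp only [Finset.coe_insert, Set.mem_insert_iff, Finset.mem_coe] at this
      rcases this with rfl | hmem
      · exact absurd rfl hy.2
      · exact hmem
  obtain ⟨hsdec, hsfil⟩ := hdec s hsS
  obtain ⟨htdec, htfil⟩ := hdec t htS
  set a := s.count x with ha
  set b := t.count x with hb
  set s' := s.filter (· ≠ x) with hs'
  set t' := t.filter (· ≠ x) with ht'
  have hcs : a + Multiset.card s' = h := by
    have := congrArg Multiset.card hsdec; simp at this; omega
  have hct : b + Multiset.card t' = h := by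
    have := congrArg Multiset.card htdec; simp at this; omega
  have hss : a * x + s'.sum = b * x + t'.sum := by
    have h1 := congrArg Multiset.sum hsdec
    have h2 := congrArg Multiset.sum htdec
    simp [Multiset.sum_replicate] at h1 h2
    rw [hsum] at h1
    rw [h1] at h2
    linarith [h2]
  have hs'b : s'.sum < x := bound s' (by omega) hsfil
  have ht'b : t'.sum < x := bound t' (by omega) htfil
  have hab : a = b := key2 a b s'.sum t'.sum hs'b ht'b hss
  rw [hab] at hsdec hcs hss
  have hsum' : s'.sum = t'.sum := Nat.add_left_cancel hss
  have key : s' + Multiset.replicate b 0 = t' + Multiset.replicate b 0 := by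
    apply hS
    · simp; omega
    · simp; omega
    · intro y hy
      rcases Multiset.mem_add.1 hy with hy | hy
      · exact hsfil y hy
      · rw [Multiset.eq_of_mem_replicate hy]; exact h0
    · intro y hy
      rcases Multiset.mem_add.1 hy with hy | hy
      · exact htfil y hy
      · rw [Multiset.eq_of_mem_replicate hy]; exact h0
    · simp [hsum']
  have hst : s' = t' := add_right_cancel key
  rw [hsdec, htdec, hst]

lemma T_nonempty (hh : 1 ≤ h) (hBh : IsBhSet h ((Aset h k : Finset ℕ) : Set ℕ)) :
    {x : ℕ | greedy h k < x ∧ IsBhSet h ((insert x (Aset h k) : Finset ℕ) : Set ℕ)}.Nonempty := by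
  have hne : (Aset h k).Nonempty := ⟨0, zero_mem_Aset⟩
  set M := (Aset h k).max' hne with hM
  refine ⟨h * M + 1, ?_, ?_⟩
  · have h1 : greedy h k ≤ M := (Aset h k).le_max' _ greedy_mem_Aset
    have h2 : M ≤ h * M := Nat.le_mul_of_pos_left M hh
    omega
  · rw [isBh_iff]
    apply bhM_insert_big hh _ zero_mem_Aset ((isBh_iff _).1 hBh)
    intro y hy
    have h1 : y ≤ M := (Aset h k).le_max' _ hy
    have h2 : h * y ≤ h * M := Nat.mul_le_mul_left h h1
    omega

lemma master (hh : 1 ≤ h) : ∀ k, IsBhSet h ((Aset h k : Finset ℕ) : Set ℕ) ∧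
    greedy h k < greedy h (k + 1) := by
  have base : IsBhSet h ((Aset h 0 : Finset ℕ) : Set ℕ) := by
    intro a b haS hbS _
    have hab : a = b := by
      funext i
      have h1 := haS i
      have h2 := hbS i
      simp [Aset_zero] at h1 h2
      rw [h1, h2]
    rw [hab]
  intro k
  induction k with
  | zero =>
    refine ⟨base, ?_⟩
    rw [greedy_zero, greedy_one]; exact Nat.zero_lt_one
  | succ j ih =>
    obtain ⟨ihBh, ihlt⟩ := ih
    have hBh1 : IsBhSet h ((Aset h (j + 1) : Finset ℕ) : Set ℕ) := by
      cases Nat.eq_zero_or_pos j with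
      | inl hj =>
        subst hj
        rw [isBh_iff]
        have hA1 : Aset h 1 = insert 1 (Aset h 0) := by
          rw [show (1 : ℕ) = 0 + 1 from rfl, Aset_succ, greedy_one]
        rw [hA1]
        apply bhM_insert_big hh _ zero_mem_Aset ((isBh_iff _).1 base)
        intro y hy
        simp [Aset_zero] at hy
        subst hy; omega
      | inr hj =>
        have hmem := Nat.sInf_mem (T_nonempty hh ihBh)
        rw [← greedy_succ hj] at hmem
        rw [Aset_succ]
        exact hmem.2
    refine ⟨hBh1, ?_⟩
    have hmem := Nat.sInf_mem (T_nonempty hh hBh1)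
    rw [← greedy_succ (Nat.succ_le_succ (Nat.zero_le j))] at hmem
    exact hmem.1

lemma greedy_strictMono (hh : 1 ≤ h) : StrictMono (greedy h) :=
  strictMono_nat_of_lt_succ fun k => (master hh k).2

lemma isBh_Aset (hh : 1 ≤ h) (k : ℕ) : IsBhSet h ((Aset h k : Finset ℕ) : Set ℕ) :=
  (master hh k).1


lemma card_finsum {ι : Type*} (s : Finset ι) (f : ι → Multiset ℕ) :
    Multiset.card (∑ i ∈ s, f i) = ∑ i ∈ s, Multiset.card (f i) := by
  induction s using Finset.cons_induction with
  | empty => simp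
  | cons a s ha ih => simp [Finset.sum_cons, ih]

lemma sum_finsum {ι : Type*} (s : Finset ι) (f : ι → Multiset ℕ) :
    (∑ i ∈ s, f i).sum = ∑ i ∈ s, (f i).sum := by
  induction s using Finset.cons_induction with
  | empty => simp
  | cons a s ha ih => simp [Finset.sum_cons, ih]

/-- `msOf h k m` is the multiset with `m i` copies of `γ_{i+1}(h)` for each `i`. -/
noncomputable def msOf (h k : ℕ) (m : Fin k → ℕ) : Multiset ℕ :=
  ∑ i : Fin k, Multiset.replicate (m i) (greedy h (i.1 + 1))

lemma card_msOf (m : Fin k → ℕ) : Multiset.card (msOf h k m) = ∑ i, m i := by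
  rw [msOf, card_finsum]; simp

lemma sum_msOf (m : Fin k → ℕ) : (msOf h k m).sum = ∑ i, m i * greedy h (i.1 + 1) := by
  rw [msOf, sum_finsum]
  refine Finset.sum_congr rfl fun i _ => ?_
  simp [Multiset.sum_replicate, smul_eq_mul]

lemma mem_msOf {m : Fin k → ℕ} {x : ℕ} (hx : x ∈ msOf h k m) :
    ∃ i : Fin k, x = greedy h (i.1 + 1) := by
  rw [msOf] at hx
  obtain ⟨i, _, hi⟩ := Multiset.mem_sum.1 hx
  exact ⟨i, Multiset.eq_of_mem_replicate hi⟩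

lemma count_msOf_eq_zero {m : Fin k → ℕ} {n : ℕ}
    (hn : ∀ i : Fin k, greedy h (i.1 + 1) ≠ n) : (msOf h k m).count n = 0 := by
  rw [msOf, Multiset.count_sum']
  refine Finset.sum_eq_zero fun i _ => ?_
  rw [Multiset.count_replicate, if_neg (hn i)]

/-- key counting lemma : a multiset supported on `Aset h k` is determined by the counts of the
`γ_{i+1}` for `i < k`, plus zeros. -/
lemma counts (hh : 1 ≤ h) (u : Multiset ℕ) (hu : ∀ x ∈ u, x ∈ Aset h k) :
    (∑ i : Fin k, u.count (greedy h (i.1 + 1))) ≤ Multiset.card u ∧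
    (∑ i : Fin k, u.count (greedy h (i.1 + 1)) * greedy h (i.1 + 1)) = u.sum := by
  have hinj := (greedy_strictMono hh).injective
  induction u using Multiset.induction with
  | empty => simp
  | cons x u ih =>
    have hx : x ∈ Aset h k := hu x (Multiset.mem_cons_self x u)
    have hu' : ∀ y ∈ u, y ∈ Aset h k := fun y hy => hu y (Multiset.mem_cons_of_mem hy)
    obtain ⟨ih1, ih2⟩ := ih hu'
    obtain ⟨j, hj, hjx⟩ := mem_Aset_iff.1 hx
    have hcnt : ∀ i : Fin k, (x ::ₘ u).count (greedy h (i.1 + 1)) =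
        u.count (greedy h (i.1 + 1)) + if greedy h (i.1 + 1) = x then 1 else 0 := by
      intro i; rw [Multiset.count_cons]
    cases j with
    | zero =>
      have hx0 : x = 0 := by rw [← hjx]; rfl
      have hne : ∀ i : Fin k, greedy h (i.1 + 1) ≠ x := by
        intro i
        rw [hx0]
        have := greedy_strictMono hh (show 0 < i.1 + 1 by omega)
        rw [greedy_zero] at this
        omega
      constructor
      · calc (∑ i : Fin k, (x ::ₘ u).count (greedy h (i.1 + 1)))
            = ∑ i : Fin k, u.count (greedy h (i.1 + 1)) := by
              refine Finset.sum_congr rfl fun i _ => ?_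
              rw [hcnt i, if_neg (hne i), add_zero]
          _ ≤ Multiset.card u := ih1
          _ ≤ Multiset.card (x ::ₘ u) := by simp
      · calc (∑ i : Fin k, (x ::ₘ u).count (greedy h (i.1 + 1)) * greedy h (i.1 + 1))
            = ∑ i : Fin k, u.count (greedy h (i.1 + 1)) * greedy h (i.1 + 1) := by
              refine Finset.sum_congr rfl fun i _ => ?_
              rw [hcnt i, if_neg (hne i), add_zero]
          _ = u.sum := ih2
          _ = (x ::ₘ u).sum := by rw [Multiset.sum_cons, hx0, zero_add]
    | succ j' =>
      have hj' : j' < k := by omega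
      set e : Fin k := ⟨j', hj'⟩ with he
      have hcond : ∀ i : Fin k, (greedy h (i.1 + 1) = x) ↔ (i = e) := by
        intro i
        constructor
        · intro hgi
          have h5 : i.1 + 1 = j' + 1 := hinj (by rw [hgi, ← hjx])
          have he1 : e.1 = j' := rfl
          exact Fin.ext (by omega)
        · rintro rfl
          rw [← hjx]
      constructor
      · calc (∑ i : Fin k, (x ::ₘ u).count (greedy h (i.1 + 1)))
            = ∑ i : Fin k, (u.count (greedy h (i.1 + 1)) + if i = e then 1 else 0) := by
              refine Finset.sum_congr rfl fun i _ => ?_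
              rw [hcnt i]
              congr 1
              simp only [hcond i]
          _ = (∑ i : Fin k, u.count (greedy h (i.1 + 1))) + 1 := by
              rw [Finset.sum_add_distrib, Finset.sum_ite_eq' Finset.univ e fun _ => 1]
              simp
          _ ≤ Multiset.card u + 1 := by omega
          _ = Multiset.card (x ::ₘ u) := by simp
      · calc (∑ i : Fin k, (x ::ₘ u).count (greedy h (i.1 + 1)) * greedy h (i.1 + 1))
            = ∑ i : Fin k, (u.count (greedy h (i.1 + 1)) * greedy h (i.1 + 1)
                + if i = e then greedy h (i.1 + 1) else 0) := by
              refine Finset.sum_congr rfl fun i _ => ?_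
              rw [hcnt i]
              rw [add_mul]
              congr 1
              by_cases hie : i = e
              · rw [if_pos ((hcond i).2 hie), if_pos hie, one_mul]
              · rw [if_neg (fun hc => hie ((hcond i).1 hc)), if_neg hie, zero_mul]
          _ = (∑ i : Fin k, u.count (greedy h (i.1 + 1)) * greedy h (i.1 + 1))
                + greedy h (j' + 1) := by
              rw [Finset.sum_add_distrib,
                Finset.sum_ite_eq' Finset.univ e fun i : Fin k => greedy h (i.1 + 1)]
              simp
              rfl
          _ = (x ::ₘ u).sum := by rw [ih2, Multiset.sum_cons, hjx, add_comm]


lemma split_mem (n : ℕ) (S : Finset ℕ) (u : Multiset ℕ)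
    (hu : ∀ x ∈ u, x = n ∨ x ∈ S) :
    u = Multiset.replicate (u.count n) n + u.filter (· ≠ n) ∧
    ∀ y ∈ u.filter (· ≠ n), y ∈ S := by
  constructor
  · conv_lhs => rw [← Multiset.filter_add_not (· = n) u]
    rw [Multiset.filter_eq']
  · intro y hy
    rw [Multiset.mem_filter] at hy
    rcases hu y hy.1 with rfl | hmem
    · exact absurd rfl hy.2
    · exact hmem

lemma extract (hh : 1 ≤ h) {n : ℕ} (hn : n ∉ Aset h k)
    (hBh : BhM h ((Aset h k : Finset ℕ) : Set ℕ))
    (s t : Multiset ℕ) (hs : Multiset.card s = h) (ht : Multiset.card t = h)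
    (hsS : ∀ x ∈ s, x = n ∨ x ∈ Aset h k) (htS : ∀ x ∈ t, x = n ∨ x ∈ Aset h k)
    (hsum : s.sum = t.sum) (hne : s ≠ t) (hcnt : t.count n ≤ s.count n) :
    ∃ r : ℕ, 1 ≤ r ∧ r ≤ h ∧ ∃ m m' : Fin k → ℕ, (∑ i, m i) ≤ h ∧ (∑ i, m' i) ≤ h - r ∧
      (n : ℚ) = (1 / (r : ℚ)) *
        ∑ i : Fin k, (greedy h (i.1 + 1) : ℚ) * ((m i : ℚ) - (m' i : ℚ)) := by
  obtain ⟨hsdec, hsfil⟩ := split_mem n (Aset h k) s hsS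
  obtain ⟨htdec, htfil⟩ := split_mem n (Aset h k) t htS
  set a := s.count n with ha
  set b := t.count n with hb
  set s' := s.filter (· ≠ n) with hs'
  set t' := t.filter (· ≠ n) with ht'
  have hcs : a + Multiset.card s' = h := by
    have := congrArg Multiset.card hsdec; simp at this; omega
  have hct : b + Multiset.card t' = h := by
    have := congrArg Multiset.card htdec; simp at this; omega
  have hss : a * n + s'.sum = b * n + t'.sum := by
    have h1 := congrArg Multiset.sum hsdec
    have h2 := congrArg Multiset.sum htdec
    simp [Multiset.sum_replicate] at h1 h2
    rw [hsum] at h1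
    rw [h1] at h2
    linarith [h2]
  -- the case a = b would contradict s ≠ t
  have hab : b < a := by
    rcases Nat.lt_or_ge b a with hlt | hge
    · exact hlt
    · exfalso
      have hba : a = b := le_antisymm hge hcnt
      rw [hba] at hsdec hcs hss
      have hsum' : s'.sum = t'.sum := by
        have := Nat.add_left_cancel hss
        exact this
      have key : s' + Multiset.replicate b 0 = t' + Multiset.replicate b 0 := by
        apply hBh
        · simp; omega
        · simp; omega
        · intro y hy
          rcases Multiset.mem_add.1 hy with hy | hy
          · exact hsfil y hy
          · rw [Multiset.eq_of_mem_replicate hy]; exact zero_mem_Aset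
        · intro y hy
          rcases Multiset.mem_add.1 hy with hy | hy
          · exact htfil y hy
          · rw [Multiset.eq_of_mem_replicate hy]; exact zero_mem_Aset
        · simp [hsum']
      have hst : s' = t' := add_right_cancel key
      exact hne (by rw [hsdec, htdec, hst])
  set r := a - b with hr
  have har : a = b + r := by omega
  have hrn : r * n + s'.sum = t'.sum := by
    rw [har, add_mul] at hss
    linarith [hss]
  obtain ⟨hm'1, hm'2⟩ := counts hh s' hsfil
  obtain ⟨hm1, hm2⟩ := counts hh t' htfil
  have hm_le : (∑ i : Fin k, t'.count (greedy h (i.1 + 1))) ≤ h := by omega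
  have hm'_le : (∑ i : Fin k, s'.count (greedy h (i.1 + 1))) ≤ h - r := by omega
  refine ⟨r, by omega, by omega, (fun i => t'.count (greedy h (i.1 + 1))),
    (fun i => s'.count (greedy h (i.1 + 1))), by simpa using hm_le, by simpa using hm'_le, ?_⟩
  have hnat : r * n + ∑ i : Fin k, s'.count (greedy h (i.1 + 1)) * greedy h (i.1 + 1)
      = ∑ i : Fin k, t'.count (greedy h (i.1 + 1)) * greedy h (i.1 + 1) := by
    rw [hm'2, hm2]; exact hrn
  have hr0 : (r : ℚ) ≠ 0 := Nat.cast_ne_zero.mpr (by omega)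
  have hq : (r : ℚ) * n + ∑ i : Fin k,
        (s'.count (greedy h (i.1 + 1)) : ℚ) * (greedy h (i.1 + 1) : ℚ)
      = ∑ i : Fin k, (t'.count (greedy h (i.1 + 1)) : ℚ) * (greedy h (i.1 + 1) : ℚ) := by
    exact_mod_cast hnat
  have hS : ∑ i : Fin k, (greedy h (i.1 + 1) : ℚ) *
        ((t'.count (greedy h (i.1 + 1)) : ℚ) - (s'.count (greedy h (i.1 + 1)) : ℚ))
      = (∑ i : Fin k, (t'.count (greedy h (i.1 + 1)) : ℚ) * (greedy h (i.1 + 1) : ℚ))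
        - ∑ i : Fin k, (s'.count (greedy h (i.1 + 1)) : ℚ) * (greedy h (i.1 + 1) : ℚ) := by
    rw [← Finset.sum_sub_distrib]
    exact Finset.sum_congr rfl fun i _ => by ring
  rw [hS]
  field_simp
  linarith [hq]


lemma gamma_succ_not_F (hh : 1 ≤ h) (hk : 1 ≤ k) :
    ¬ ∃ r : ℕ, 1 ≤ r ∧ r ≤ h ∧ ∃ m m' : Fin k → ℕ,
      (∑ i, m i) ≤ h ∧ (∑ i, m' i) ≤ h - r ∧
      ((greedy h (k + 1) : ℚ)) = (1 / (r : ℚ)) *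
        ∑ i : Fin k, (greedy h (i.1 + 1) : ℚ) * ((m i : ℚ) - (m' i : ℚ)) := by
  rintro ⟨r, hr1, hrh, m, m', hm, hm', heq⟩
  set n := greedy h (k + 1) with hn
  have hmono := greedy_strictMono hh
  have hr0 : (r : ℚ) ≠ 0 := Nat.cast_ne_zero.mpr (by omega)
  have hS : ∑ i : Fin k, (greedy h (i.1 + 1) : ℚ) * ((m i : ℚ) - (m' i : ℚ))
      = (∑ i : Fin k, (m i : ℚ) * (greedy h (i.1 + 1) : ℚ))
        - ∑ i : Fin k, (m' i : ℚ) * (greedy h (i.1 + 1) : ℚ) := by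
    rw [← Finset.sum_sub_distrib]; exact Finset.sum_congr rfl fun i _ => by ring
  rw [hS] at heq
  have hq : (r : ℚ) * n + ∑ i : Fin k, (m' i : ℚ) * (greedy h (i.1 + 1) : ℚ)
      = ∑ i : Fin k, (m i : ℚ) * (greedy h (i.1 + 1) : ℚ) := by
    rw [heq]; field_simp; ring
  have hnat : r * n + ∑ i : Fin k, m' i * greedy h (i.1 + 1)
      = ∑ i : Fin k, m i * greedy h (i.1 + 1) := by
    exact_mod_cast hq
  set s : Multiset ℕ := Multiset.replicate r n + msOf h k m'
      + Multiset.replicate (h - (r + ∑ i, m' i)) 0 with hsdef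
  set t : Multiset ℕ := msOf h k m + Multiset.replicate (h - ∑ i, m i) 0 with htdef
  have hb : BhM h ((Aset h (k + 1) : Finset ℕ) : Set ℕ) :=
    (isBh_iff _).1 (isBh_Aset hh (k + 1))
  have hrm : r + (∑ i, m' i) ≤ h := by omega
  have hcard_s : Multiset.card s = h := by
    rw [hsdef]; simp [card_msOf]; omega
  have hcard_t : Multiset.card t = h := by
    rw [htdef]; simp [card_msOf]; omega
  have hmem_s : ∀ x ∈ s, x ∈ ((Aset h (k + 1) : Finset ℕ) : Set ℕ) := by
    intro x hx
    rw [hsdef] at hx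
    rw [Finset.mem_coe]
    rcases Multiset.mem_add.1 hx with hx | hx
    · rcases Multiset.mem_add.1 hx with hx | hx
      · rw [Multiset.eq_of_mem_replicate hx, hn]; exact greedy_mem_Aset
      · obtain ⟨i, rfl⟩ := mem_msOf hx
        exact mem_Aset_iff.2 ⟨i.1 + 1, by omega, rfl⟩
    · rw [Multiset.eq_of_mem_replicate hx]; exact zero_mem_Aset
  have hmem_t : ∀ x ∈ t, x ∈ ((Aset h (k + 1) : Finset ℕ) : Set ℕ) := by
    intro x hx
    rw [htdef] at hx
    rw [Finset.mem_coe]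
    rcases Multiset.mem_add.1 hx with hx | hx
    · obtain ⟨i, rfl⟩ := mem_msOf hx
      exact mem_Aset_iff.2 ⟨i.1 + 1, by omega, rfl⟩
    · rw [Multiset.eq_of_mem_replicate hx]; exact zero_mem_Aset
  have hsum_s : s.sum = r * n + ∑ i : Fin k, m' i * greedy h (i.1 + 1) := by
    rw [hsdef]
    simp [Multiset.sum_replicate, sum_msOf, smul_eq_mul]
  have hsum_t : t.sum = ∑ i : Fin k, m i * greedy h (i.1 + 1) := by
    rw [htdef]
    simp [Multiset.sum_replicate, sum_msOf, smul_eq_mul]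
  have heqst : s = t := hb s t hcard_s hcard_t hmem_s hmem_t
    (by rw [hsum_s, hsum_t, hnat])
  have hne_n : ∀ i : Fin k, greedy h (i.1 + 1) ≠ n := by
    intro i
    exact ne_of_lt (hmono (show i.1 + 1 < k + 1 by omega))
  have hn0 : (0 : ℕ) ≠ n := by
    have := hmono (show 0 < k + 1 by omega)
    rw [greedy_zero] at this
    omega
  have hcnt_s : s.count n = r := by
    rw [hsdef]
    rw [Multiset.count_add, Multiset.count_add, Multiset.count_replicate,
      Multiset.count_replicate, if_pos rfl, if_neg hn0, count_msOf_eq_zero hne_n]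
    omega
  have hcnt_t : t.count n = 0 := by
    rw [htdef]
    rw [Multiset.count_add, Multiset.count_replicate, if_neg hn0,
      count_msOf_eq_zero hne_n]
  rw [heqst, hcnt_t] at hcnt_s
  omega

end BH

theorem stmt_18 (h k : ℕ) (hh : 1 ≤ h) (hk : 1 ≤ k) :
    greedy h (k + 1) = sInf {n : ℕ |
      ¬ ∃ r : ℕ, 1 ≤ r ∧ r ≤ h ∧ ∃ m m' : Fin k → ℕ,
        (∑ i, m i) ≤ h ∧ (∑ i, m' i) ≤ h - r ∧
        (n : ℚ) = (1 / (r : ℚ)) *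
          ∑ i : Fin k, (greedy h (i.1 + 1) : ℚ) * ((m i : ℚ) - (m' i : ℚ))} := by
  classical
  open BH in
  set S : Set ℕ := {n : ℕ |
      ¬ ∃ r : ℕ, 1 ≤ r ∧ r ≤ h ∧ ∃ m m' : Fin k → ℕ,
        (∑ i, m i) ≤ h ∧ (∑ i, m' i) ≤ h - r ∧
        (n : ℚ) = (1 / (r : ℚ)) *
          ∑ i : Fin k, (greedy h (i.1 + 1) : ℚ) * ((m i : ℚ) - (m' i : ℚ))} with hSdef
  have hmemS : greedy h (k + 1) ∈ S := BH.gamma_succ_not_F hh hk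
  have hB : ∀ n : ℕ, n < greedy h (k + 1) →
      ∃ r : ℕ, 1 ≤ r ∧ r ≤ h ∧ ∃ m m' : Fin k → ℕ,
        (∑ i, m i) ≤ h ∧ (∑ i, m' i) ≤ h - r ∧
        (n : ℚ) = (1 / (r : ℚ)) *
          ∑ i : Fin k, (greedy h (i.1 + 1) : ℚ) * ((m i : ℚ) - (m' i : ℚ)) := by
    intro n hlt
    by_cases hmem : n ∈ BH.Aset h k
    · obtain ⟨j, hj, hjn⟩ := BH.mem_Aset_iff.1 hmem
      cases j with
      | zero =>
        subst hjn
        refine ⟨1, le_refl 1, hh, 0, 0, by simp, by simp, ?_⟩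
        rw [BH.greedy_zero]
        simp
      | succ j' =>
        have hj'k : j' < k := by omega
        subst hjn
        refine ⟨1, le_refl 1, hh, (fun i => if i = ⟨j', hj'k⟩ then 1 else 0), 0, ?_, ?_, ?_⟩
        · rw [Finset.sum_ite_eq' Finset.univ (⟨j', hj'k⟩ : Fin k) fun _ => 1]
          simpa using hh
        · simp
        · have hterm : ∀ i : Fin k, (greedy h (i.1 + 1) : ℚ) *
              ((((if i = (⟨j', hj'k⟩ : Fin k) then 1 else 0 : ℕ)) : ℚ) - (((0 : Fin k → ℕ) i : ℚ)))
              = if i = (⟨j', hj'k⟩ : Fin k) then (greedy h (i.1 + 1) : ℚ) else 0 := by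
            intro i
            by_cases hi : i = (⟨j', hj'k⟩ : Fin k) <;> simp [hi]
          rw [Finset.sum_congr rfl fun i _ => hterm i,
            Finset.sum_ite_eq' Finset.univ (⟨j', hj'k⟩ : Fin k)
              fun i : Fin k => (greedy h (i.1 + 1) : ℚ)]
          simp
    · have hn0 : n ≠ 0 := fun hc => hmem (hc ▸ BH.zero_mem_Aset)
      have h1mem : (1 : ℕ) ∈ BH.Aset h k := BH.mem_Aset_iff.2 ⟨1, hk, BH.greedy_one⟩
      have hn1 : n ≠ 1 := fun hc => hmem (hc ▸ h1mem)
      have h2n : 2 ≤ n := by omega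
      set T := {j : ℕ | n < greedy h j} with hT
      have hTk : k + 1 ∈ T := hlt
      have hj0mem : n < greedy h (sInf T) := Nat.sInf_mem ⟨k + 1, hTk⟩
      have hj0le : sInf T ≤ k + 1 := Nat.sInf_le hTk
      have h0T : sInf T ≠ 0 := by
        intro hc; rw [hc, BH.greedy_zero] at hj0mem; omega
      have h1T : sInf T ≠ 1 := by
        intro hc; rw [hc, BH.greedy_one] at hj0mem; omega
      obtain ⟨j, hj⟩ : ∃ j, sInf T = j + 1 := ⟨sInf T - 1, by omega⟩
      have hj1 : 1 ≤ j := by omega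
      have hjk : j ≤ k := by omega
      have hjn : greedy h j < n := by
        have hnotT : j ∉ T := fun hc => absurd (Nat.sInf_le hc) (by omega)
        have h3 : ¬ n < greedy h j := hnotT
        have hne : greedy h j ≠ n := fun hc => hmem (BH.mem_Aset_iff.2 ⟨j, hjk, hc⟩)
        omega
      have hlt2 : n < greedy h (j + 1) := by rw [← hj]; exact hj0mem
      have hnotB : ¬ IsBhSet h ((insert n (BH.Aset h j) : Finset ℕ) : Set ℕ) := by
        intro hBh
        have hmemT : n ∈ {x : ℕ | greedy h j < x ∧
            IsBhSet h ((insert x (BH.Aset h j) : Finset ℕ) : Set ℕ)} := ⟨hjn, hBh⟩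
        have h4 := Nat.sInf_le hmemT
        rw [← BH.greedy_succ hj1] at h4
        omega
      have hnotBk : ¬ BH.BhM h ((insert n (BH.Aset h k) : Finset ℕ) : Set ℕ) := by
        intro hc
        apply hnotB
        rw [BH.isBh_iff]
        apply BH.bhM_anti _ hc
        intro x hx
        simp only [Finset.coe_insert, Set.mem_insert_iff, Finset.mem_coe] at hx ⊢
        rcases hx with rfl | hx
        · exact Or.inl rfl
        · exact Or.inr (BH.Aset_mono hjk hx)
      rw [BH.BhM] at hnotBk
      push_neg at hnotBk
      obtain ⟨s, t, hcs, hct, hsS, htS, hsumeq, hnest⟩ := hnotBk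
      have hBk : BH.BhM h ((BH.Aset h k : Finset ℕ) : Set ℕ) :=
        (BH.isBh_iff _).1 (BH.isBh_Aset hh k)
      have hmemconv : ∀ u : Multiset ℕ,
          (∀ x ∈ u, x ∈ ((insert n (BH.Aset h k) : Finset ℕ) : Set ℕ)) →
          ∀ x ∈ u, x = n ∨ x ∈ BH.Aset h k := by
        intro u hu x hx
        have := hu x hx
        simpa using this
      rcases le_total (t.count n) (s.count n) with hc | hc
      · exact BH.extract hh hmem hBk s t hcs hct (hmemconv s hsS) (hmemconv t htS)
          hsumeq hnest hc
      · exact BH.extract hh hmem hBk t s hct hcs (hmemconv t htS) (hmemconv s hsS)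
          hsumeq.symm (Ne.symm hnest) hc
  apply le_antisymm
  · by_contra hcon
    push_neg at hcon
    have h1 := Nat.sInf_mem (⟨_, hmemS⟩ : S.Nonempty)
    exact h1 (hB _ hcon)
  · exact Nat.sInf_le hmemS
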